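/- Let V be an open subset of ℂ and (X, μ) a measure space. Suppose f : V × X → ℂ is such that (i) for almost every x ∈ X the map v ↦ f(v,x) is analytic on V, (ii) for every v ∈ V the map x ↦ f(v,x) is measurable, and (iii) there exists an integrable function g on X with |f(v,x)| ≤ g(x) for all v ∈ V and x ∈ X. Then the function F(v) = ∫_X f(v,x) dμ(x) is analytic on V. -/

import Mathlib

open MeasureTheory

/-- analyticity criterion: an integral of a family of maps that
are analytic in the parameter, measurable in the integration variable, and
uniformly dominated by an integrable function, is analytic in the parameter. -/
theorem analyticity_criterion {X : Type*} [MeasurableSpace X] (μ : Measure X)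
    (V : Set ℂ) (hV : IsOpen V) (f : ℂ → X → ℂ) (g : X → ℝ)
    (h_anal : ∀ᵐ x ∂μ, DifferentiableOn ℂ (fun v => f v x) V)
    (h_meas : ∀ v ∈ V, AEStronglyMeasurable (fun x => f v x) μ)
    (h_int : Integrable g μ)
    (h_bound : ∀ v ∈ V, ∀ x, ‖f v x‖ ≤ g x) :
    DifferentiableOn ℂ (fun v => ∫ x, f v x ∂μ) V := by
  intro v₀ hv₀
  -- choose ε with closedBall v₀ (2ε) ⊆ V
  obtain ⟨δ, hδ, hδV⟩ := Metric.isOpen_iff.1 hV v₀ hv₀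
  set ε : ℝ := δ / 3 with hε_def
  have hε : 0 < ε := by positivity
  have hsub : Metric.closedBall v₀ (2 * ε) ⊆ V := fun z hz => hδV (by
    simp only [Metric.mem_closedBall] at hz
    simp only [Metric.mem_ball]
    linarith)
  have hball : Metric.ball v₀ ε ⊆ V := fun z hz =>
    hsub (Metric.mem_closedBall.2 (le_of_lt (lt_of_lt_of_le (Metric.mem_ball.1 hz) (by linarith))))
  -- the derivative family
  set F' : ℂ → X → ℂ := fun v x => deriv (fun w => f w x) v with hF'
  -- measurability of F' v₀ : limit of difference quotients
  have hF'_meas : AEStronglyMeasurable (F' v₀) μ := by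
    set c : ℕ → ℂ := fun n => (ε / (n + 2) : ℝ)
    have hcne : ∀ n, c n ≠ 0 := by
      intro n
      simp only [c, ne_eq, Complex.ofReal_eq_zero]
      positivity
    have hcmem : ∀ n, v₀ + c n ∈ V := by
      intro n
      apply hball
      simp only [Metric.mem_ball, dist_eq_norm, add_sub_cancel_left, c, Complex.norm_real,
        Real.norm_eq_abs]
      rw [abs_of_pos (by positivity)]
      rw [div_lt_iff₀ (by positivity)]
      nlinarith [hε]
    have hmeas : ∀ n : ℕ, AEStronglyMeasurable
        (fun x => (c n)⁻¹ • (f (v₀ + c n) x - f v₀ x)) μ := fun n =>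
      ((h_meas _ (hcmem n)).sub (h_meas _ hv₀)).const_smul ((c n)⁻¹)
    refine aestronglyMeasurable_of_tendsto_ae Filter.atTop hmeas ?_
    filter_upwards [h_anal] with x hx
    have hd : HasDerivAt (fun w => f w x) (F' v₀ x) v₀ :=
      ((hx.differentiableAt (hV.mem_nhds hv₀))).hasDerivAt
    have := hd.tendsto_slope_zero
    have hc0 : Filter.Tendsto c Filter.atTop (nhdsWithin 0 {0}ᶜ) := by
      rw [tendsto_nhdsWithin_iff]
      constructor
      · have : Filter.Tendsto (fun n : ℕ => ε / (n + 2)) Filter.atTop (nhds 0) := by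
          apply Filter.Tendsto.div_atTop tendsto_const_nhds
          exact Filter.tendsto_atTop_add_const_right _ 2 tendsto_natCast_atTop_atTop
        have h2 : Filter.Tendsto (fun n : ℕ => ((ε / (n + 2) : ℝ) : ℂ)) Filter.atTop
            (nhds ((0 : ℝ) : ℂ)) := (Complex.continuous_ofReal.tendsto _).comp this
        simpa only [Complex.ofReal_zero] using h2
      · exact Filter.Eventually.of_forall fun n => hcne n
    have := this.comp hc0
    simpa [Function.comp_def] using this
  -- integrability of f v₀
  have hF_int : Integrable (fun x => f v₀ x) μ :=
    h_int.mono' (h_meas v₀ hv₀) (Filter.Eventually.of_forall fun x => h_bound v₀ hv₀ x)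
  -- bound on the derivative via Cauchy estimates
  have h_db : ∀ᵐ x ∂μ, ∀ v ∈ Metric.ball v₀ ε, ‖F' v x‖ ≤ g x / ε := by
    filter_upwards [h_anal] with x hx v hv
    have hcb : Metric.closedBall v ε ⊆ V := by
      intro z hz
      apply hsub
      simp only [Metric.mem_closedBall] at hz ⊢
      calc dist z v₀ ≤ dist z v + dist v v₀ := dist_triangle _ _ _
        _ ≤ ε + ε := add_le_add hz (Metric.mem_ball.1 hv).le
        _ = 2 * ε := by ring
    have hd : DiffContOnCl ℂ (fun w => f w x) (Metric.ball v ε) := by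
      apply DifferentiableOn.diffContOnCl
      rw [closure_ball v hε.ne']
      exact hx.mono hcb
    exact Complex.norm_deriv_le_of_forall_mem_sphere_norm_le hε hd fun z hz =>
      h_bound z (hcb (Metric.sphere_subset_closedBall hz)) x
  -- derivatives exist on the ball
  have h_diff : ∀ᵐ x ∂μ, ∀ v ∈ Metric.ball v₀ ε, HasDerivAt (fun w => f w x) (F' v x) v := by
    filter_upwards [h_anal] with x hx v hv
    exact (hx.differentiableAt (hV.mem_nhds (hball hv))).hasDerivAt
  have hF_meas : ∀ᶠ v in nhds v₀, AEStronglyMeasurable (fun x => f v x) μ := by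
    filter_upwards [hV.mem_nhds hv₀] with v hv using h_meas v hv
  have key := hasDerivAt_integral_of_dominated_loc_of_deriv_le (Metric.ball_mem_nhds v₀ hε) hF_meas hF_int hF'_meas
    h_db (h_int.div_const ε) h_diff
  exact key.2.differentiableAt.differentiableWithinAt
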